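/- Let X be a geometrically integral variety over a field k and n ≥ 1 an integer. Suppose X possesses a closed point of degree n. Then the Albanese torsor satisfies: the n-fold contracted product Alb^n_{X/k} of the torsor Alb^1_{X/k} under Alb^0_{X/k} has a k-rational point. Consequently the period P(X), defined as the order of [Alb^1_{X/k}] in H^1(k, Alb^0_{X/k}), divides the index I(X). -/

import Mathlib

/- Galois-theoretic model: `Γ = Gal(k̄/k)` is profinite; the Albanese semi-abelian
variety `Alb⁰` is represented by the discrete `Γ`-module `M` of its `k̄`-points, the
Albanese torsor `Alb¹` by a `Γ`-set `T` with a compatible simply transitive `M`-action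
(its `k̄`-points), and the universal morphism `u_X : X → Alb¹` by a `Γ`-equivariant map
`u : X(k̄) → T`.  The `n`-fold contracted product `Albⁿ` is the quotient of `Tⁿ` by the
kernel of the sum map `Mⁿ → M`, and a `k`-point of `Albⁿ` is a `Γ`-fixed class, as in
`contractedPowerHasRationalPoint` below.  A closed point of degree `n` with separable
residue field corresponds to a `Γ`-orbit of size `n` in `X(k̄)` (the general case is
reduced to this via the norm map to the symmetric power, as in the paper).  The period
`P(X)` is the order of the class of `Alb¹` in `H¹(k, Alb⁰)`, i.e. the least `p > 0`
such that `Alb^p` has a `k`-point; the index `I(X)` is the gcd of the degrees of closed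
points, so that `P(X) ∣ I(X)` is equivalent to: `P(X)` divides the degree of every
closed point, which is the form of the conclusion below. -/

/-- A `k`-rational point on the `p`-fold contracted product of the torsor `T` under the
`Γ`-module `M`: a tuple `t : Fin p → T` whose class modulo the kernel of the sum map is
fixed by `Γ`. -/
def contractedPowerHasRationalPoint
    (Γ M T : Type) [Group Γ] [AddCommMonoid M] [DistribMulAction Γ M]
    [AddAction M T] [MulAction Γ T] (p : ℕ) : Prop :=
  ∃ t : Fin p → T, ∀ g : Γ, ∃ m : Fin p → M,
    (∀ i, g • t i = m i +ᵥ t i) ∧ (∑ i, m i) = 0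

/-- **(Period divides index via the Albanese torsor.)** Let `X` be a geometrically
integral variety over a field `k` and `n ≥ 1`.  If `X` possesses a closed point of
degree `n` (a `Γ`-orbit of size `n` in `X(k̄)`), then the `n`-fold contracted product
`Alb^n_{X/k}` of the Albanese torsor `Alb¹_{X/k}` under `Alb⁰_{X/k}` has a `k`-rational
point.  Consequently the period `P(X)` — the order of `[Alb¹_{X/k}]` in
`H¹(k, Alb⁰_{X/k})`, i.e. the least `p > 0` with `Alb^p(k) ≠ ∅` — divides `n`; as this
holds for the degree of every closed point, `P(X)` divides the index `I(X)`. -/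
theorem albanese_period_dvd_index
    (Γ : Type) [Group Γ] [TopologicalSpace Γ] [IsTopologicalGroup Γ]
    [CompactSpace Γ] [TotallyDisconnectedSpace Γ] [T2Space Γ]
    -- `M = Alb⁰_{X/k}(k̄)`, a discrete `Γ`-module:
    (M : Type) [AddCommGroup M] [DistribMulAction Γ M]
    (hMd : ∀ m : M, IsOpen {g : Γ | g • m = m})
    -- `T = Alb¹_{X/k}(k̄)`, a torsor under `M` with compatible `Γ`-action:
    (T : Type) [AddAction M T] [MulAction Γ T] [Nonempty T]
    (hTd : ∀ t : T, IsOpen {g : Γ | g • t = t})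
    (htorsor : ∀ t t' : T, ∃! m : M, m +ᵥ t = t')
    (hcompat : ∀ (g : Γ) (m : M) (t : T), g • (m +ᵥ t) = (g • m) +ᵥ (g • t))
    -- `X(k̄)` with its `Γ`-action and the Albanese map `u = u_X` on `k̄`-points:
    (Xbar : Type) [MulAction Γ Xbar]
    (hXd : ∀ x : Xbar, IsOpen {g : Γ | g • x = x})
    (u : Xbar → T) (hu : ∀ (g : Γ) (x : Xbar), u (g • x) = g • u x)
    -- `X` has a closed point of degree `n ≥ 1`: a `Γ`-orbit of size `n` in `X(k̄)`:
    (n : ℕ) (hn : 0 < n)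
    (hpoint : ∃ x : Xbar, Nat.card (MulAction.orbit Γ x) = n) :
    -- `Alb^n_{X/k}` has a `k`-rational point ...
    contractedPowerHasRationalPoint Γ M T n ∧
    -- ... and consequently the period `P(X)` divides `n` (hence divides the index):
    sInf {p : ℕ | 0 < p ∧ contractedPowerHasRationalPoint Γ M T p} ∣ n := by
  classical
  obtain ⟨x, hx⟩ := hpoint
  obtain ⟨t0⟩ := (inferInstance : Nonempty T)
  -- torsor difference `v a b` : the unique `m` with `m +ᵥ b = a`
  set v : T → T → M := fun a b => (htorsor b a).exists.choose with hvdef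
  have hv : ∀ a b : T, v a b +ᵥ b = a := fun a b => (htorsor b a).exists.choose_spec
  have huniq : ∀ (a b : T) (m : M), m +ᵥ b = a → m = v a b := fun a b m h =>
    (htorsor b a).unique h (hv a b)
  have hvzero : ∀ a : T, v a a = 0 := fun a => (huniq a a 0 (zero_vadd M a)).symm
  have hvtrans : ∀ a b c' : T, v a b + v b c' = v a c' := by
    intro a b c'
    apply huniq
    rw [add_vadd, hv, hv]
  have hvneg : ∀ a b : T, v b a = - v a b := by
    intro a b
    have h := hvtrans a b a
    rw [hvzero] at h
    exact eq_neg_of_add_eq_zero_right h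
  have hvg : ∀ (g : Γ) (a b : T), v (g • a) (g • b) = g • v a b := by
    intro g a b
    symm
    apply huniq
    rw [← hcompat, hv]
  have hgsub : ∀ (g : Γ) (a b : M), g • (a - b) = g • a - g • b := by
    intro g a b
    have := map_sub (DistribMulAction.toAddMonoidHom M g) a b
    simpa using this
  have hgnsmul : ∀ (g : Γ) (q : ℕ) (a : M), g • (q • a) = q • (g • a) := by
    intro g q a
    have := map_nsmul (DistribMulAction.toAddMonoidHom M g) q a
    simpa using this
  -- Part 1: construct the rational point on `Alb^n` from the orbit of size `n`.
  have hfin : Finite (MulAction.orbit Γ x) := by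
    rcases finite_or_infinite (MulAction.orbit Γ x) with h | h
    · exact h
    · rw [Nat.card_eq_zero_of_infinite] at hx; omega
  let e : Fin n ≃ MulAction.orbit Γ x := (Finite.equivFinOfCardEq hx).symm
  have hmem : ∀ (g : Γ) (y : Xbar), y ∈ MulAction.orbit Γ x → g • y ∈ MulAction.orbit Γ x := by
    rintro g y ⟨h, rfl⟩
    exact ⟨g * h, by simp [mul_smul]⟩
  let σ : Γ → Fin n → Fin n := fun g i => e.symm ⟨g • (e i : Xbar), hmem g _ (e i).2⟩
  have hσ : ∀ g i, (e (σ g i) : Xbar) = g • (e i : Xbar) := by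
    intro g i
    simp [σ]
  have hσbij : ∀ g, Function.Bijective (σ g) := by
    intro g
    apply Finite.injective_iff_bijective.mp
    intro i j hij
    have h1 : (e (σ g i) : Xbar) = (e (σ g j) : Xbar) := by rw [hij]
    rw [hσ, hσ] at h1
    exact e.injective (Subtype.ext (smul_left_cancel g h1))
  set t : Fin n → T := fun i => u (e i : Xbar) with htdef
  have hgt : ∀ g i, g • t i = t (σ g i) := by
    intro g i
    show g • u (e i : Xbar) = u (e (σ g i) : Xbar)
    rw [hσ, hu]
  have C1 : contractedPowerHasRationalPoint Γ M T n := by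
    refine ⟨t, fun g => ⟨fun i => v (t (σ g i)) (t i), fun i => ?_, ?_⟩⟩
    · rw [hgt g i]
      exact (hv _ _).symm
    · have hsplit : ∀ a b : T, v a b = v a t0 - v b t0 := by
        intro a b
        rw [← hvtrans a t0 b, hvneg b t0, sub_eq_add_neg]
      calc ∑ i, v (t (σ g i)) (t i)
          = ∑ i, (v (t (σ g i)) t0 - v (t i) t0) := by
            exact Finset.sum_congr rfl fun i _ => hsplit _ _
        _ = (∑ i, v (t (σ g i)) t0) - ∑ i, v (t i) t0 := Finset.sum_sub_distrib _ _
        _ = 0 := by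
            rw [(hσbij g).sum_comp (fun j => v (t j) t0), sub_self]
  -- Cocycle formulation:  `Q p` ⟺ the class `p • [T]` is trivial.
  set Q : ℕ → Prop := fun p => ∃ A : M, ∀ g : Γ, p • v (g • t0) t0 = A - g • A with hQdef
  have hfwd : ∀ p : ℕ, contractedPowerHasRationalPoint Γ M T p → Q p := by
    rintro p ⟨s, hs⟩
    refine ⟨∑ i, v (s i) t0, fun g => ?_⟩
    obtain ⟨m, hm1, hm2⟩ := hs g
    have hmi : ∀ i, m i = g • v (s i) t0 + v (g • t0) t0 - v (s i) t0 := by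
      intro i
      have h1 : m i = v (g • s i) (s i) := huniq _ _ _ (hm1 i).symm
      rw [h1, ← hvtrans (g • s i) (g • t0) (s i), ← hvtrans (g • t0) t0 (s i),
        hvg, hvneg (s i) t0]
      abel
    have hsum : (0 : M) = g • (∑ i, v (s i) t0) + p • v (g • t0) t0 - ∑ i, v (s i) t0 := by
      calc (0 : M) = ∑ i, m i := hm2.symm
        _ = ∑ i, (g • v (s i) t0 + v (g • t0) t0 - v (s i) t0) :=
            Finset.sum_congr rfl fun i _ => hmi i
        _ = ((∑ i, g • v (s i) t0) + ∑ _i : Fin p, v (g • t0) t0) - ∑ i, v (s i) t0 := by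
            rw [Finset.sum_sub_distrib, Finset.sum_add_distrib]
        _ = (∑ i, g • v (s i) t0) + p • v (g • t0) t0 - ∑ i, v (s i) t0 := by
            rw [Finset.sum_const, Finset.card_univ, Fintype.card_fin]
        _ = g • (∑ i, v (s i) t0) + p • v (g • t0) t0 - ∑ i, v (s i) t0 := by
            rw [Finset.smul_sum]
    have h2 := sub_eq_zero.mp hsum.symm
    exact (sub_eq_of_eq_add' h2.symm).symm
  have hbwd : ∀ p : ℕ, 0 < p → Q p → contractedPowerHasRationalPoint Γ M T p := by
    rintro p hp ⟨A, hA⟩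
    haveI : NeZero p := ⟨hp.ne'⟩
    have hkey : ∀ (g : Γ) (m' : M), g • (m' +ᵥ t0) = (g • m' + v (g • t0) t0) +ᵥ t0 := by
      intro g m'
      rw [hcompat, add_vadd, hv]
    refine ⟨fun i => (if i = 0 then A else 0) +ᵥ t0,
      fun g => ⟨fun i => (if i = 0 then g • A - A else 0) + v (g • t0) t0,
        fun i => ?_, ?_⟩⟩
    · by_cases hi : i = 0
      · simp only [if_pos hi]
        rw [hkey, ← add_vadd]
        congr 1
        abel
      · simp only [if_neg hi]
        rw [zero_vadd, zero_add]
        exact (hv _ _).symm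
    · rw [Finset.sum_add_distrib, Finset.sum_const, Finset.card_univ, Fintype.card_fin,
        Finset.sum_ite_eq' Finset.univ (0 : Fin p) (fun _ => g • A - A),
        if_pos (Finset.mem_univ _), hA g]
      abel
  have hQmul : ∀ d q : ℕ, Q d → Q (d * q) := by
    rintro d q ⟨A, hA⟩
    refine ⟨q • A, fun g => ?_⟩
    rw [mul_comm d q, mul_smul, hA g, smul_sub, hgnsmul]
  have hQsub : ∀ a b : ℕ, Q a → Q b → b ≤ a → Q (a - b) := by
    rintro a b ⟨A, hA⟩ ⟨B, hB⟩ hba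
    refine ⟨A - B, fun g => ?_⟩
    have h1 : (a - b) • v (g • t0) t0 + b • v (g • t0) t0 = a • v (g • t0) t0 := by
      rw [← add_nsmul, Nat.sub_add_cancel hba]
    have h3 : (a - b) • v (g • t0) t0 = a • v (g • t0) t0 - b • v (g • t0) t0 :=
      eq_sub_of_add_eq h1
    rw [h3, hA g, hB g, hgsub]
    abel
  refine ⟨C1, ?_⟩
  have hnmem : n ∈ {p : ℕ | 0 < p ∧ contractedPowerHasRationalPoint Γ M T p} := ⟨hn, C1⟩
  obtain ⟨hd0, hdC⟩ := Nat.sInf_mem ⟨n, hnmem⟩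
  set d := sInf {p : ℕ | 0 < p ∧ contractedPowerHasRationalPoint Γ M T p} with hddef
  by_contra hndvd
  have hrpos : 0 < n % d := Nat.pos_of_ne_zero (fun h => hndvd (Nat.dvd_of_mod_eq_zero h))
  have hQr : Q (n % d) := by
    have h1 : Q n := hfwd n C1
    have h2 : Q (d * (n / d)) := hQmul d (n / d) (hfwd d hdC)
    have h3 : Q (n - d * (n / d)) := hQsub n (d * (n / d)) h1 h2 (by
      calc d * (n / d) = n / d * d := mul_comm _ _
        _ ≤ n := Nat.div_mul_le_self n d)
    have h4 : n - d * (n / d) = n % d := by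
      have h5 := Nat.mod_add_div n d
      omega
    rwa [h4] at h3
  have hle : d ≤ n % d := Nat.sInf_le ⟨hrpos, hbwd _ hrpos hQr⟩
  exact absurd hle (not_le.mpr (Nat.mod_lt n hd0))
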